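/- Let h : P → N be a surjective monoid homomorphism of commutative monoids and let J = ker(ℤ[P] → ℤ[N]) be the kernel of the induced map of monoid algebras. Then J is generated as a ℤ[P]-module (even as an abelian group) by the elements p − p' for pairs p, p' ∈ P with h(p) = h(p'), and the map v_h : J/J² → ℤ[N] ⊗_ℤ W₀ given by λ(p − p') ↦ λ·h(p') ⊗ (p − p') (where W₀ = ker(P^gp → N^gp), written additively) is a well-defined homomorphism of ℤ[N]-modules. -/

import Mathlib

open TensorProduct

namespace Stmt19Aux

variable {P N : Type} [CommMonoid P] [CommMonoid N]
variable {Pgp Ngp : Type} [CommGroup Pgp] [CommGroup Ngp]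
variable (h : P →* N) (s : N → P) (ιP : P →* Pgp) (ιN : N →* Ngp) (hgp : Pgp →* Ngp)

/-- helper to prove commutative-group identities -/
theorem cg_eq {G : Type} [CommGroup G] {a b : G} (H : Additive.ofMul a = Additive.ofMul b) :
    a = b := Additive.ofMul.injective H

/-- The element `w_p = ιP p * (ιP (s (h p)))⁻¹` of `ker hgp`. -/
def wEl (hs : ∀ n, h (s n) = n) (hcomp : ∀ p : P, hgp (ιP p) = ιN (h p)) (p : P) :
    ↥(MonoidHom.ker hgp) :=
  ⟨ιP p * (ιP (s (h p)))⁻¹, by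
    simp [MonoidHom.mem_ker, map_mul, map_inv, hcomp, hs]⟩

/-- The correction element `c_{q,n}`. -/
def cEl (hs : ∀ n, h (s n) = n) (hcomp : ∀ p : P, hgp (ιP p) = ιN (h p)) (q : P) (n : N) :
    ↥(MonoidHom.ker hgp) :=
  ⟨ιP q * (ιP (s (h q * n)))⁻¹ * ιP (s n), by
    have : hgp (ιP q * (ιP (s (h q * n)))⁻¹ * ιP (s n)) =
        ιN (h q) * (ιN (h q) * ιN n)⁻¹ * ιN n := by
      simp [map_mul, map_inv, hcomp, hs]
    rw [MonoidHom.mem_ker, this]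
    apply cg_eq
    simp only [ofMul_mul, ofMul_inv, ofMul_one]
    abel⟩

variable (hs : ∀ n, h (s n) = n) (hcomp : ∀ p : P, hgp (ιP p) = ιN (h p))

/-- The map `D : ℤ[P] → ℤ[N] ⊗ W₀`. -/
noncomputable def D :
    MonoidAlgebra ℤ P →ₗ[ℤ] MonoidAlgebra ℤ N ⊗[ℤ] Additive ↥(MonoidHom.ker hgp) :=
  (Finsupp.lsum ℤ fun p => LinearMap.toSpanSingleton ℤ _
    (MonoidAlgebra.single (h p) (1 : ℤ) ⊗ₜ[ℤ] Additive.ofMul (wEl h s ιP ιN hgp hs hcomp p)))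
      ∘ₗ (MonoidAlgebra.coeffLinearEquiv ℤ).toLinearMap

theorem D_single (p : P) (b : ℤ) :
    D h s ιP ιN hgp hs hcomp (MonoidAlgebra.single p b) =
      b • (MonoidAlgebra.single (h p) (1 : ℤ) ⊗ₜ[ℤ]
        Additive.ofMul (wEl h s ιP ιN hgp hs hcomp p)) := by
  rw [D, LinearMap.comp_apply]
  erw [Finsupp.lsum_single]
  rw [LinearMap.toSpanSingleton_apply]

/-- The correction map `T_q : ℤ[N] → ℤ[N] ⊗ W₀`. -/
noncomputable def Tq (q : P) :
    MonoidAlgebra ℤ N →ₗ[ℤ] MonoidAlgebra ℤ N ⊗[ℤ] Additive ↥(MonoidHom.ker hgp) :=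
  (Finsupp.lsum ℤ fun n => LinearMap.toSpanSingleton ℤ _
    (MonoidAlgebra.single (h q * n) (1 : ℤ) ⊗ₜ[ℤ] Additive.ofMul (cEl h s ιP ιN hgp hs hcomp q n)))
      ∘ₗ (MonoidAlgebra.coeffLinearEquiv ℤ).toLinearMap

theorem Tq_single (q : P) (n : N) (b : ℤ) :
    Tq h s ιP ιN hgp hs hcomp q (MonoidAlgebra.single n b) =
      b • (MonoidAlgebra.single (h q * n) (1 : ℤ) ⊗ₜ[ℤ]
        Additive.ofMul (cEl h s ιP ιN hgp hs hcomp q n)) := by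
  rw [Tq, LinearMap.comp_apply]
  erw [Finsupp.lsum_single]
  rw [LinearMap.toSpanSingleton_apply]

theorem wEl_mul (q p : P) :
    wEl h s ιP ιN hgp hs hcomp (q * p) =
      wEl h s ιP ιN hgp hs hcomp p * cEl h s ιP ιN hgp hs hcomp q (h p) := by
  apply Subtype.ext
  show ιP (q * p) * (ιP (s (h (q * p))))⁻¹ =
    ιP p * (ιP (s (h p)))⁻¹ * (ιP q * (ιP (s (h q * h p)))⁻¹ * ιP (s (h p)))
  rw [map_mul h, map_mul ιP]
  apply cg_eq
  simp only [ofMul_mul, ofMul_inv]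
  abel

theorem D_one_mul (q : P) (u : MonoidAlgebra ℤ P) :
    D h s ιP ιN hgp hs hcomp (MonoidAlgebra.single q 1 * u) =
      MonoidAlgebra.single (h q) (1 : ℤ) • D h s ιP ιN hgp hs hcomp u +
        Tq h s ιP ιN hgp hs hcomp q (MonoidAlgebra.mapDomainRingHom ℤ h u) := by
  induction u using MonoidAlgebra.induction_linear with
  | zero => simp
  | add f g hf hg =>
      simp only [mul_add, map_add, smul_add, hf, hg]
      abel
  | single p b =>
      rw [MonoidAlgebra.single_mul_single, one_mul, D_single, D_single]
      have hmap : MonoidAlgebra.mapDomainRingHom ℤ h (MonoidAlgebra.single p b) =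
          MonoidAlgebra.single (h p) b := MonoidAlgebra.mapDomain_single
      rw [hmap, Tq_single, smul_comm (MonoidAlgebra.single (h q) (1:ℤ)) b, ← smul_add]
      congr 1
      rw [TensorProduct.smul_tmul', smul_eq_mul, MonoidAlgebra.single_mul_single, one_mul,
        ← TensorProduct.tmul_add, map_mul h, wEl_mul]
      rw [ofMul_mul]

theorem D_mul (x u : MonoidAlgebra ℤ P)
    (hu : MonoidAlgebra.mapDomainRingHom ℤ h u = 0) :
    D h s ιP ιN hgp hs hcomp (x * u) =
      MonoidAlgebra.mapDomainRingHom ℤ h x • D h s ιP ιN hgp hs hcomp u := by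
  induction x using MonoidAlgebra.induction_linear with
  | zero => simp
  | add f g hf hg => rw [add_mul, map_add, map_add, hf, hg, add_smul]
  | single q b =>
      have h1 : (MonoidAlgebra.single q b : MonoidAlgebra ℤ P) =
          b • MonoidAlgebra.single q 1 := by
        rw [MonoidAlgebra.smul_single', mul_one]
      have h2 : MonoidAlgebra.mapDomainRingHom ℤ h (MonoidAlgebra.single q 1) =
          MonoidAlgebra.single (h q) 1 := MonoidAlgebra.mapDomain_single
      rw [h1, smul_mul_assoc, map_smul, D_one_mul, hu, map_zero, add_zero,
        map_zsmul, h2, smul_assoc]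

/-- The section map `ℤ[N] → ℤ[P]`, `single n b ↦ single (s n) b`. -/
noncomputable def secMap : MonoidAlgebra ℤ N →ₗ[ℤ] MonoidAlgebra ℤ P :=
  (Finsupp.lsum ℤ fun n => LinearMap.toSpanSingleton ℤ _ (MonoidAlgebra.single (s n) (1 : ℤ)))
    ∘ₗ (MonoidAlgebra.coeffLinearEquiv ℤ).toLinearMap

theorem secMap_single (n : N) (b : ℤ) :
    secMap s (MonoidAlgebra.single n b) = b • MonoidAlgebra.single (s n) (1 : ℤ) := by
  rw [secMap, LinearMap.comp_apply]
  erw [Finsupp.lsum_single]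
  rw [LinearMap.toSpanSingleton_apply]

include hs in
theorem part1 :
    (RingHom.ker (MonoidAlgebra.mapDomainRingHom ℤ h)).restrictScalars ℤ =
      Submodule.span ℤ {x : MonoidAlgebra ℤ P | ∃ p p' : P, h p = h p' ∧
        x = MonoidAlgebra.single p (1 : ℤ) - MonoidAlgebra.single p' (1 : ℤ)} := by
  apply le_antisymm
  · intro x hx
    have hx' : MonoidAlgebra.mapDomainRingHom ℤ h x = 0 := hx
    have key : ∀ y : MonoidAlgebra ℤ P,
        y - secMap s (MonoidAlgebra.mapDomainRingHom ℤ h y) ∈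
          Submodule.span ℤ {x : MonoidAlgebra ℤ P | ∃ p p' : P, h p = h p' ∧
            x = MonoidAlgebra.single p (1 : ℤ) - MonoidAlgebra.single p' (1 : ℤ)} := by
      intro y
      induction y using MonoidAlgebra.induction_linear with
      | zero => simp
      | add f g hf hg =>
          rw [map_add, map_add, add_sub_add_comm]
          exact Submodule.add_mem _ hf hg
      | single p b =>
          have hmap : MonoidAlgebra.mapDomainRingHom ℤ h (MonoidAlgebra.single p b) =
              MonoidAlgebra.single (h p) b := MonoidAlgebra.mapDomain_single
          have hsb : (MonoidAlgebra.single p b : MonoidAlgebra ℤ P) =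
              b • MonoidAlgebra.single p 1 := by
            rw [MonoidAlgebra.smul_single', mul_one]
          rw [hmap, secMap_single, hsb, ← smul_sub]
          exact Submodule.smul_mem _ _ (Submodule.subset_span ⟨p, s (h p), (hs (h p)).symm, rfl⟩)
    have := key x
    rwa [hx', map_zero, sub_zero] at this
  · rw [Submodule.span_le]
    rintro x ⟨p, p', hpp, rfl⟩
    have : MonoidAlgebra.mapDomainRingHom ℤ h
        (MonoidAlgebra.single p (1 : ℤ) - MonoidAlgebra.single p' (1 : ℤ)) = 0 := by
      rw [map_sub]
      have h1 : MonoidAlgebra.mapDomainRingHom ℤ h (MonoidAlgebra.single p (1 : ℤ)) =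
          MonoidAlgebra.single (h p) 1 := MonoidAlgebra.mapDomain_single
      have h2 : MonoidAlgebra.mapDomainRingHom ℤ h (MonoidAlgebra.single p' (1 : ℤ)) =
          MonoidAlgebra.single (h p') 1 := MonoidAlgebra.mapDomain_single
      rw [h1, h2, hpp, sub_self]
    exact this

end Stmt19Aux

open Stmt19Aux in
/-- let `h : P → N` be a surjective homomorphism of commutative monoids,
`J = ker(ℤ[P] → ℤ[N])`, `P^gp`, `N^gp` the group completions (given here by groups `Pgp`,
`Ngp` with maps `ιP`, `ιN` and an induced map `hgp` compatible with `h`), and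
`W₀ = ker(hgp : P^gp → N^gp)` (written additively).  Then `J` is generated, even as an
abelian group, by the elements `p − p'` with `h p = h p'`, and the map
`v_h : J/J² → ℤ[N] ⊗_ℤ W₀`, `λ(p − p') ↦ λ·h(p') ⊗ (p − p')`, is a well-defined
`ℤ[N]`-module homomorphism (equivalently, an additive map `v` satisfying
`v(q • x) = h(q) • v(x)`). -/
theorem stmt19 (P N : Type) [CommMonoid P] [CommMonoid N]
    (h : P →* N) (hh : Function.Surjective h)
    (Pgp Ngp : Type) [CommGroup Pgp] [CommGroup Ngp]
    (ιP : P →* Pgp) (ιN : N →* Ngp) (hgp : Pgp →* Ngp)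
    (hcomp : ∀ p : P, hgp (ιP p) = ιN (h p)) :
    -- `J` is generated as an abelian group by the elements `p - p'` with `h p = h p'`
    (RingHom.ker (MonoidAlgebra.mapDomainRingHom ℤ h)).restrictScalars ℤ =
      Submodule.span ℤ {x : MonoidAlgebra ℤ P | ∃ p p' : P, h p = h p' ∧
        x = MonoidAlgebra.single p (1 : ℤ) - MonoidAlgebra.single p' (1 : ℤ)} ∧
    -- `v_h : J/J² → ℤ[N] ⊗ W₀` is well defined and `ℤ[N]`-linear
    ∃ v : (RingHom.ker (MonoidAlgebra.mapDomainRingHom ℤ h)).Cotangent →ₗ[ℤ]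
        (MonoidAlgebra ℤ N ⊗[ℤ] Additive ↥(MonoidHom.ker hgp)),
      (∀ (u : ↥(RingHom.ker (MonoidAlgebra.mapDomainRingHom ℤ h))) (p p' : P)
          (w : ↥(MonoidHom.ker hgp)),
        h p = h p' →
        (u : MonoidAlgebra ℤ P) =
          MonoidAlgebra.single p (1 : ℤ) - MonoidAlgebra.single p' (1 : ℤ) →
        (w : Pgp) = ιP p * (ιP p')⁻¹ →
        v ((RingHom.ker (MonoidAlgebra.mapDomainRingHom ℤ h)).toCotangent u) =
          MonoidAlgebra.single (h p') (1 : ℤ) ⊗ₜ[ℤ] Additive.ofMul w) ∧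
      (∀ (q : P) (x : (RingHom.ker (MonoidAlgebra.mapDomainRingHom ℤ h)).Cotangent),
        v ((MonoidAlgebra.single q (1 : ℤ)) • x) =
          (MonoidAlgebra.single (h q) (1 : ℤ)) • v x) := by
  choose s hs using hh
  refine ⟨part1 h s hs, ?_⟩
  set J : Ideal (MonoidAlgebra ℤ P) := RingHom.ker (MonoidAlgebra.mapDomainRingHom ℤ h) with hJ
  set D' := D h s ιP ιN hgp hs hcomp with hD'
  let vJ : ↥J →ₗ[ℤ] MonoidAlgebra ℤ N ⊗[ℤ] Additive ↥(MonoidHom.ker hgp) :=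
    D'.comp (J.restrictScalars ℤ).subtype
  have hker : (J • ⊤ : Submodule (MonoidAlgebra ℤ P) ↥J).restrictScalars ℤ ≤
      LinearMap.ker vJ := by
    intro u hu
    rw [LinearMap.mem_ker]
    have hu' : u ∈ (J • ⊤ : Submodule (MonoidAlgebra ℤ P) ↥J) := hu
    refine Submodule.smul_induction_on hu' ?_ ?_
    · intro r hr n _
      show D' ((r • n : ↥J) : MonoidAlgebra ℤ P) = 0
      have : ((r • n : ↥J) : MonoidAlgebra ℤ P) = r * (n : MonoidAlgebra ℤ P) := rfl
      rw [this, hD', D_mul h s ιP ιN hgp hs hcomp r n (RingHom.mem_ker.mp n.2),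
        RingHom.mem_ker.mp hr, zero_smul]
    · intro x y hx hy
      show vJ (x + y) = 0
      rw [map_add, hx, hy, add_zero]
  let v : J.Cotangent →ₗ[ℤ] MonoidAlgebra ℤ N ⊗[ℤ] Additive ↥(MonoidHom.ker hgp) :=
    (Submodule.liftQ _ vJ hker).comp
      (Submodule.Quotient.restrictScalarsEquiv ℤ
        (J • ⊤ : Submodule (MonoidAlgebra ℤ P) ↥J)).symm.toLinearMap
  have hv : ∀ u : ↥J, v (J.toCotangent u) = D' (u : MonoidAlgebra ℤ P) := fun u => rfl
  refine ⟨v, ?_, ?_⟩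
  · intro u p p' w hpp hu hw
    rw [hv, hu, map_sub, hD', D_single, D_single, one_smul, one_smul, hpp,
      ← TensorProduct.tmul_sub]
    congr 1
    rw [← ofMul_div]
    congr 1
    apply Subtype.ext
    show (ιP p * (ιP (s (h p)))⁻¹) / (ιP p' * (ιP (s (h p')))⁻¹) = (w : Pgp)
    rw [hw, hpp]
    apply cg_eq
    simp only [ofMul_div, ofMul_mul, ofMul_inv]
    abel
  · intro q x
    obtain ⟨u, rfl⟩ := J.toCotangent_surjective x
    rw [← map_smul J.toCotangent, hv, hv]
    have hc : ((MonoidAlgebra.single q (1 : ℤ) • u : ↥J) : MonoidAlgebra ℤ P) =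
        MonoidAlgebra.single q (1 : ℤ) * (u : MonoidAlgebra ℤ P) := rfl
    rw [hc, hD', D_mul h s ιP ιN hgp hs hcomp _ _ (RingHom.mem_ker.mp u.2)]
    have h2 : MonoidAlgebra.mapDomainRingHom ℤ h (MonoidAlgebra.single q (1 : ℤ)) =
        MonoidAlgebra.single (h q) 1 := MonoidAlgebra.mapDomain_single
    rw [h2]
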